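/- For every algebraic number α and every nonzero natural number k, the quotient ring ℤ[α]/(k) is finite. -/

import Mathlib

open Polynomial

/-- In a finite commutative monoid, some positive power of `c` is idempotent-ish. -/
lemma aux_pow_idem {S : Type} [CommMonoid S] [Finite S] (c : S) :
    ∃ m : ℕ, 1 ≤ m ∧ c ^ m = c ^ (2 * m) := by
  obtain ⟨a, b, hab, h⟩ := Finite.exists_ne_map_eq_of_infinite (fun i : ℕ => c ^ (i + 1))
  wlog hlt : a < b generalizing a b
  · exact this b a hab.symm h.symm (by omega)
  set d := b - a with hd
  have hd1 : 1 ≤ d := by omega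
  have hstep : ∀ e, a + 1 ≤ e → c ^ e = c ^ (e + d) := by
    intro e he
    have h1 : c ^ (a + 1) = c ^ (a + 1 + d) := by
      rw [h]; congr 1; omega
    calc c ^ e = c ^ (e - (a + 1)) * c ^ (a + 1) := by
          rw [← pow_add]; congr 1; omega
      _ = c ^ (e - (a + 1)) * c ^ (a + 1 + d) := by rw [h1]
      _ = c ^ (e + d) := by rw [← pow_add]; congr 1; omega
  have key : ∀ j e, a + 1 ≤ e → c ^ e = c ^ (e + j * d) := by
    intro j
    induction j with
    | zero => intro e _; simp
    | succ j ih =>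
      intro e he
      calc c ^ e = c ^ (e + d) := hstep e he
        _ = c ^ (e + d + j * d) := ih (e + d) (by omega)
        _ = c ^ (e + (j + 1) * d) := by congr 1; ring
  refine ⟨(a + 1) * d, Nat.mul_pos (Nat.succ_pos a) hd1, ?_⟩
  have := key (a + 1) ((a + 1) * d) (Nat.le_mul_of_pos_right _ hd1)
  rw [this]; congr 1; ring

/-- If `x ^ m = 0` and `T ⧸ (x)` is finite, then `T` is finite. -/
lemma aux_finite_of_nilpotent {T : Type} [CommRing T] (x : T) (m : ℕ) (hx : x ^ m = 0)
    (hfin : Finite (T ⧸ Ideal.span {x})) : Finite T := by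
  have hsurj : Function.Surjective (Ideal.Quotient.mk (Ideal.span {x})) :=
    Ideal.Quotient.mk_surjective
  set s : (T ⧸ Ideal.span {x}) → T := Function.surjInv hsurj with hs
  have hsec : ∀ q, Ideal.Quotient.mk (Ideal.span {x}) (s q) = q := fun q =>
    Function.surjInv_eq hsurj q
  have key : ∀ j (t : T), ∃ (a : ℕ → (T ⧸ Ideal.span {x})) (r : T),
      t = (∑ i ∈ Finset.range j, s (a i) * x ^ i) + r * x ^ j := by
    intro j
    induction j with
    | zero => intro t; exact ⟨fun _ => 0, t, by simp⟩
    | succ j ih =>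
      intro t
      obtain ⟨a, r, hr⟩ := ih t
      have hmem : r - s (Ideal.Quotient.mk (Ideal.span {x}) r) ∈ Ideal.span {x} := by
        rw [← Ideal.Quotient.eq_zero_iff_mem, map_sub, hsec, sub_self]
      obtain ⟨r', hr'⟩ := Ideal.mem_span_singleton'.mp hmem
      set a' : ℕ → T ⧸ Ideal.span {x} :=
        fun i => if i = j then Ideal.Quotient.mk (Ideal.span {x}) r else a i with ha'
      refine ⟨a', r', ?_⟩
      rw [Finset.sum_range_succ]
      have hsum : (∑ i ∈ Finset.range j, s (a' i) * x ^ i)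
          = ∑ i ∈ Finset.range j, s (a i) * x ^ i := by
        apply Finset.sum_congr rfl
        intro i hi
        have : a' i = a i := by simp [ha', (Finset.mem_range.mp hi).ne]
        rw [this]
      have htop : a' j = Ideal.Quotient.mk (Ideal.span {x}) r := by simp [ha']
      rw [hsum, htop]
      linear_combination hr - x ^ j * hr'
  have hQ : Function.Surjective
      (fun a : Fin m → (T ⧸ Ideal.span {x}) => ∑ i : Fin m, s (a i) * x ^ (i : ℕ)) := by
    intro t
    obtain ⟨a, r, hr⟩ := key m t
    refine ⟨fun i => a i, ?_⟩
    beta_reduce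
    rw [Fin.sum_univ_eq_sum_range (fun i => s (a i) * x ^ i)]
    rw [hr, hx, mul_zero, add_zero]
  exact Finite.of_surjective _ hQ

/-- If `t` satisfies a polynomial relation whose coefficient at `N` maps to `1`,
and `R` is generated by `t` over the finite `S`, then `R` is finite. -/
lemma aux_finite_of_unit_lead {S R : Type} [CommRing S] [CommRing R] [Finite S]
    (φ : S →+* R) (t : R)
    (hsurj : Function.Surjective (fun p : S[X] => p.eval₂ φ t))
    (f : S[X]) (N : ℕ) (hd : f.natDegree ≤ N) (h1 : φ (f.coeff N) = 1)
    (hroot : f.eval₂ φ t = 0) : Finite R := by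
  have hsum : f.eval₂ φ t = ∑ i ∈ Finset.range (N + 1), φ (f.coeff i) * t ^ i :=
    eval₂_eq_sum_range' φ (Nat.lt_succ_of_le hd) t
  rw [Finset.sum_range_succ, h1, one_mul, hroot] at hsum
  have hN : t ^ N = -∑ i ∈ Finset.range N, φ (f.coeff i) * t ^ i := by
    linear_combination -hsum
  rcases Nat.eq_zero_or_pos N with hN0 | hNpos
  · subst hN0
    simp only [Finset.range_zero, Finset.sum_empty, pow_zero, neg_zero] at hN
    haveI : Subsingleton R := subsingleton_of_zero_eq_one hN.symm
    exact Finite.of_subsingleton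
  obtain ⟨M, rfl⟩ : ∃ M, N = M + 1 := ⟨N - 1, by omega⟩
  -- closure of the "span" under multiplication by t
  have hmul : ∀ b : ℕ → S, ∃ b' : ℕ → S,
      (∑ i ∈ Finset.range (M + 1), φ (b i) * t ^ i) * t
        = ∑ i ∈ Finset.range (M + 1), φ (b' i) * t ^ i := by
    intro b
    refine ⟨fun j => (if j = 0 then 0 else b (j - 1)) - b M * f.coeff j, ?_⟩
    have expand : ∑ i ∈ Finset.range (M + 1),
        φ ((if i = 0 then 0 else b (i - 1)) - b M * f.coeff i) * t ^ i
        = (∑ i ∈ Finset.range (M + 1), φ (if i = 0 then (0:S) else b (i - 1)) * t ^ i)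
          - φ (b M) * ∑ i ∈ Finset.range (M + 1), φ (f.coeff i) * t ^ i := by
      rw [Finset.mul_sum, ← Finset.sum_sub_distrib]
      apply Finset.sum_congr rfl
      intro i _
      rw [map_sub, map_mul]
      ring
    have shift : ∑ i ∈ Finset.range (M + 1), φ (if i = 0 then (0:S) else b (i - 1)) * t ^ i
        = ∑ i ∈ Finset.range M, φ (b i) * t ^ (i + 1) := by
      rw [Finset.sum_range_succ' (fun i => φ (if i = 0 then (0:S) else b (i - 1)) * t ^ i)]
      simp
    rw [expand, shift]
    rw [Finset.sum_range_succ (fun i => φ (b i) * t ^ i), add_mul, Finset.sum_mul]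
    have : (∑ i ∈ Finset.range M, φ (b i) * t ^ i * t)
        = ∑ i ∈ Finset.range M, φ (b i) * t ^ (i + 1) := by
      apply Finset.sum_congr rfl; intro i _; ring
    rw [this]
    have ht1 : φ (b M) * t ^ M * t = φ (b M) * t ^ (M + 1) := by ring
    rw [ht1, hN]
    ring
  have main : ∀ p : S[X], ∃ b : ℕ → S,
      p.eval₂ φ t = ∑ i ∈ Finset.range (M + 1), φ (b i) * t ^ i := by
    intro p
    induction p using Polynomial.induction_on with
    | C a =>
      refine ⟨fun i => if i = 0 then a else 0, ?_⟩
      rw [eval₂_C]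
      rw [Finset.sum_eq_single 0]
      · simp
      · intro i _ hi; simp [hi]
      · intro h; exact absurd (Finset.mem_range.mpr (Nat.succ_pos M)) h
    | add p q hp hq =>
      obtain ⟨b, hb⟩ := hp
      obtain ⟨b', hb'⟩ := hq
      refine ⟨b + b', ?_⟩
      rw [eval₂_add, hb, hb', ← Finset.sum_add_distrib]
      apply Finset.sum_congr rfl
      intro i _
      simp [map_add]
      ring
    | monomial n a hp =>
      obtain ⟨b, hb⟩ := hp
      obtain ⟨b', hb'⟩ := hmul b
      refine ⟨b', ?_⟩
      have : (C a * X ^ (n + 1)).eval₂ φ t = (C a * X ^ n).eval₂ φ t * t := by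
        simp [eval₂_mul, eval₂_C, eval₂_X_pow, pow_succ, mul_assoc]
      rw [this, hb, hb']
  have hQ : Function.Surjective
      (fun b : Fin (M + 1) → S => ∑ i : Fin (M + 1), φ (b i) * t ^ (i : ℕ)) := by
    intro r
    obtain ⟨p, hp⟩ := hsurj r
    obtain ⟨b, hb⟩ := main p
    refine ⟨fun i => b i, ?_⟩
    beta_reduce
    rw [Fin.sum_univ_eq_sum_range (fun i => φ (b i) * t ^ i)]
    rw [← hb]
    exact hp
  exact Finite.of_surjective _ hQ

set_option maxHeartbeats 1600000 in
/-- Key lemma: if `R` is generated over a finite ring `S` by an element `t` which is a root of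
a primitive polynomial over `S`, then `R` is finite. -/
lemma aux_key (n : ℕ) : ∀ (S R : Type) [CommRing S] [CommRing R] [Finite S]
    (φ : S →+* R) (t : R),
    Function.Surjective (fun p : S[X] => p.eval₂ φ t) →
    ∀ f : S[X], f.natDegree ≤ n → Ideal.span (Set.range f.coeff) = ⊤ →
      f.eval₂ φ t = 0 → Finite R := by
  induction n using Nat.strong_induction_on with
  | _ n IH =>
  intro S R _ _ _ φ t hsurj f hdeg hprim hroot
  by_cases hn₀ : f.natDegree = 0
  · -- constant primitive polynomial: R is trivial
    have hf : f = C (f.coeff 0) := Polynomial.eq_C_of_natDegree_eq_zero hn₀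
    have hspan : Ideal.span (Set.range f.coeff) ≤ Ideal.span {f.coeff 0} := by
      apply Ideal.span_le.mpr
      rintro _ ⟨i, rfl⟩
      rcases Nat.eq_zero_or_pos i with h | h
      · subst h; exact Ideal.subset_span rfl
      · have : f.coeff i = 0 := Polynomial.coeff_eq_zero_of_natDegree_lt (by omega)
        rw [this]; exact Ideal.zero_mem _
    rw [hprim] at hspan
    have hunit : IsUnit (f.coeff 0) := Ideal.span_singleton_eq_top.mp (top_le_iff.mp hspan)
    obtain ⟨b, hb⟩ := isUnit_iff_exists_inv.mp hunit
    have hc0 : φ (f.coeff 0) = 0 := by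
      rw [hf, eval₂_C] at hroot; exact hroot
    have h10 : (1 : R) = 0 := by
      calc (1 : R) = φ (f.coeff 0 * b) := by rw [hb, map_one]
        _ = φ (f.coeff 0) * φ b := map_mul _ _ _
        _ = 0 := by rw [hc0, zero_mul]
    haveI : Subsingleton R := subsingleton_of_zero_eq_one h10.symm
    exact Finite.of_subsingleton
  · set n₀ := f.natDegree with hn₀def
    set c := f.coeff n₀ with hcdef
    obtain ⟨m, hm1, hmc⟩ := aux_pow_idem c
    set u : R := φ (c ^ m) with hudef
    have hu : u * u = u := by
      rw [hudef, ← map_mul, ← pow_add, show m + m = 2 * m by ring, ← hmc]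
    set I₁ := Ideal.span {u} with hI₁
    set I₂ := Ideal.span {(1 : R) - u} with hI₂
    have hinj : Function.Injective
        (fun r : R => (Ideal.Quotient.mk I₁ r, Ideal.Quotient.mk I₂ r)) := by
      intro r r' hrr
      rw [Prod.mk.injEq] at hrr
      have h1 : r - r' ∈ I₁ := Ideal.Quotient.eq.mp hrr.1
      have h2 : r - r' ∈ I₂ := Ideal.Quotient.eq.mp hrr.2
      obtain ⟨a, ha⟩ := Ideal.mem_span_singleton'.mp h1
      obtain ⟨b, hb⟩ := Ideal.mem_span_singleton'.mp h2
      have e1 : (r - r') * u = 0 := by linear_combination -u * hb - b * hu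
      have e2 : (r - r') * (1 - u) = 0 := by linear_combination -(1 - u) * ha - a * hu
      have : r - r' = 0 := by linear_combination e1 + e2
      exact sub_eq_zero.mp this
    have hfin2 : Finite (R ⧸ I₂) := by
      have hmku : Ideal.Quotient.mk I₂ u = 1 := by
        have : Ideal.Quotient.mk I₂ ((1 : R) - u) = 0 :=
          Ideal.Quotient.eq_zero_iff_mem.mpr (Ideal.subset_span rfl)
        rw [map_sub, map_one, sub_eq_zero] at this
        exact this.symm
      apply aux_finite_of_unit_lead ((Ideal.Quotient.mk I₂).comp φ) (Ideal.Quotient.mk I₂ t)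
        ?_ (C (c ^ (m - 1)) * f) n₀ ?_ ?_ ?_
      · intro r
        obtain ⟨r₀, rfl⟩ := Ideal.Quotient.mk_surjective r
        obtain ⟨p, hp⟩ := hsurj r₀
        refine ⟨p, ?_⟩
        beta_reduce
        rw [← Polynomial.hom_eval₂]
        exact congrArg _ hp
      · exact le_trans (natDegree_C_mul_le _ _) le_rfl
      · rw [coeff_C_mul]
        have : c ^ (m - 1) * f.coeff n₀ = c ^ m := by
          rw [← hcdef, ← pow_succ]
          congr 1
          omega
        rw [this, RingHom.comp_apply, ← hudef, hmku]
      · rw [eval₂_mul, eval₂_C, ← Polynomial.hom_eval₂, hroot, map_zero, mul_zero]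
    have hfin1 : Finite (R ⧸ I₁) := by
      set ψ₁ := (Ideal.Quotient.mk I₁).comp φ with hψ₁
      set x : R ⧸ I₁ := ψ₁ c with hxdef
      have hxm : x ^ m = 0 := by
        rw [hxdef, ← map_pow]
        show Ideal.Quotient.mk I₁ (φ (c ^ m)) = 0
        exact Ideal.Quotient.eq_zero_iff_mem.mpr (Ideal.subset_span rfl)
      apply aux_finite_of_nilpotent x m hxm
      -- now show T ⧸ (x) is finite using the inductive hypothesis
      set mkx := Ideal.Quotient.mk (Ideal.span {x}) with hmkx
      set J := Ideal.span ({c} : Set S) with hJ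
      haveI : Finite (S ⧸ J) := Quotient.finite _
      set ψ₂ := mkx.comp ψ₁ with hψ₂
      have hψ₂c : ψ₂ c = 0 := by
        rw [hψ₂, RingHom.comp_apply, ← hxdef, hmkx]
        exact Ideal.Quotient.eq_zero_iff_mem.mpr (Ideal.subset_span rfl)
      have hlift : ∀ s ∈ J, ψ₂ s = 0 := by
        intro s hs
        obtain ⟨a, ha⟩ := Ideal.mem_span_singleton'.mp hs
        rw [← ha, map_mul, hψ₂c, mul_zero]
      set φ' : (S ⧸ J) →+* ((R ⧸ I₁) ⧸ Ideal.span {x}) := Ideal.Quotient.lift J ψ₂ hlift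
        with hφ'
      have hcomp : φ'.comp (Ideal.Quotient.mk J) = ψ₂ := by
        ext s
        simp [hφ']
      set t' := mkx (Ideal.Quotient.mk I₁ t) with ht'
      have heval : ∀ p : S[X], (p.map (Ideal.Quotient.mk J)).eval₂ φ' t'
          = mkx (Ideal.Quotient.mk I₁ (p.eval₂ φ t)) := by
        intro p
        rw [Polynomial.eval₂_map, hcomp]
        have e1 : (Ideal.Quotient.mk I₁) (eval₂ φ t p)
            = eval₂ ((Ideal.Quotient.mk I₁).comp φ) ((Ideal.Quotient.mk I₁) t) p :=
          Polynomial.hom_eval₂ _ _ _ _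
        have e2 : mkx (eval₂ ((Ideal.Quotient.mk I₁).comp φ) ((Ideal.Quotient.mk I₁) t) p)
            = eval₂ (mkx.comp ((Ideal.Quotient.mk I₁).comp φ))
                (mkx ((Ideal.Quotient.mk I₁) t)) p :=
          Polynomial.hom_eval₂ _ _ _ _
        rw [e1, e2]
      have hn₀pos : 1 ≤ n₀ := Nat.one_le_iff_ne_zero.mpr hn₀
      have hnpos : 1 ≤ n := le_trans hn₀pos hdeg
      apply IH (n - 1) (by omega) (S ⧸ J) ((R ⧸ I₁) ⧸ Ideal.span {x}) φ' t' ?_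
        (f.eraseLead.map (Ideal.Quotient.mk J)) ?_ ?_ ?_
      · -- surjectivity
        intro r
        obtain ⟨r₁, rfl⟩ := Ideal.Quotient.mk_surjective r
        obtain ⟨r₂, rfl⟩ := Ideal.Quotient.mk_surjective r₁
        obtain ⟨p, hp⟩ := hsurj r₂
        refine ⟨p.map (Ideal.Quotient.mk J), ?_⟩
        simp only at hp ⊢
        rw [heval p, hp, hmkx]
      · -- degree
        have h1 : (f.eraseLead.map (Ideal.Quotient.mk J)).natDegree ≤ f.eraseLead.natDegree :=
          Polynomial.natDegree_map_le
        have h2 := Polynomial.eraseLead_natDegree_le f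
        omega
      · -- primitivity
        have himg : (Ideal.Quotient.mk J) '' (Set.range f.coeff)
            ⊆ insert 0 (Set.range (f.eraseLead.map (Ideal.Quotient.mk J)).coeff) := by
          rintro _ ⟨_, ⟨i, rfl⟩, rfl⟩
          by_cases hi : i = n₀
          · left
            subst hi
            rw [← hcdef]
            exact Ideal.Quotient.eq_zero_iff_mem.mpr (Ideal.subset_span rfl)
          · right
            refine ⟨i, ?_⟩
            rw [Polynomial.coeff_map, Polynomial.eraseLead_coeff, if_neg hi]
        have : (⊤ : Ideal (S ⧸ J)) ≤
            Ideal.span (Set.range (f.eraseLead.map (Ideal.Quotient.mk J)).coeff) := by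
          calc (⊤ : Ideal (S ⧸ J)) = Ideal.map (Ideal.Quotient.mk J) ⊤ := (Ideal.map_top _).symm
            _ = Ideal.map (Ideal.Quotient.mk J) (Ideal.span (Set.range f.coeff)) := by rw [hprim]
            _ = Ideal.span ((Ideal.Quotient.mk J) '' (Set.range f.coeff)) := Ideal.map_span _ _
            _ ≤ Ideal.span (insert 0 (Set.range (f.eraseLead.map (Ideal.Quotient.mk J)).coeff)) :=
              Ideal.span_mono himg
            _ = Ideal.span (Set.range (f.eraseLead.map (Ideal.Quotient.mk J)).coeff) :=
              Submodule.span_insert_zero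
        exact top_le_iff.mp this
      · -- root
        rw [heval]
        have herase : f.eraseLead = f - C c * X ^ n₀ := by
          have h := Polynomial.eraseLead_add_C_mul_X_pow f
          have hl : f.leadingCoeff = c := rfl
          rw [hl, ← hn₀def] at h
          linear_combination h
        rw [herase]
        rw [eval₂_sub, eval₂_mul, eval₂_C, eval₂_X_pow, hroot, zero_sub]
        rw [map_neg, map_neg, map_mul, map_mul]
        have : mkx (Ideal.Quotient.mk I₁ (φ c)) = 0 := by
          rw [hmkx]
          exact Ideal.Quotient.eq_zero_iff_mem.mpr (Ideal.subset_span rfl)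
        rw [this, zero_mul, neg_zero]
    haveI : Finite ((R ⧸ I₁) × (R ⧸ I₂)) := Finite.instProd
    exact Finite.of_injective _ hinj

set_option maxHeartbeats 1600000 in
/-- For every algebraic number `α` and every nonzero natural number `k`,
the quotient ring `ℤ[α]/(k)` is finite. -/
theorem stmt_0 (α : AlgebraicClosure ℚ) (k : ℕ) (hk : k ≠ 0) :
    Finite ((Algebra.adjoin ℤ ({α} : Set (AlgebraicClosure ℚ))) ⧸
      Ideal.span {(k : Algebra.adjoin ℤ ({α} : Set (AlgebraicClosure ℚ)))}) := by
  haveI : NeZero k := ⟨hk⟩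
  set A := Algebra.adjoin ℤ ({α} : Set (AlgebraicClosure ℚ)) with hA
  set I : Ideal A := Ideal.span {(k : A)} with hI
  -- find a primitive integer polynomial with root α
  have halgQ : IsAlgebraic ℚ α := (AlgebraicClosure.isAlgebraic ℚ).isAlgebraic α
  have halg : IsAlgebraic ℤ α :=
    (IsFractionRing.isAlgebraic_iff ℤ ℚ (AlgebraicClosure ℚ)).mpr halgQ
  obtain ⟨q, hq0, hqα⟩ := halg
  set f₀ := q.primPart with hf₀
  have hf₀α : Polynomial.aeval α f₀ = 0 := by
    have hq := Polynomial.eq_C_content_mul_primPart q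
    rw [hq, map_mul, Polynomial.aeval_C] at hqα
    have hcont : (algebraMap ℤ (AlgebraicClosure ℚ)) q.content ≠ 0 := by
      simp only [algebraMap_int_eq, eq_intCast, ne_eq, Int.cast_eq_zero]
      exact fun h => hq0 (Polynomial.content_eq_zero_iff.mp h)
    exact (mul_eq_zero.mp hqα).resolve_left hcont
  have hprimZ : Ideal.span (Set.range f₀.coeff) = (⊤ : Ideal ℤ) := by
    obtain ⟨d, hd⟩ := (IsPrincipalIdealRing.principal (Ideal.span (Set.range f₀.coeff))).principal
    have hdvd : ∀ i, d ∣ f₀.coeff i := by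
      intro i
      have : f₀.coeff i ∈ Ideal.span (Set.range f₀.coeff) := Ideal.subset_span ⟨i, rfl⟩
      rw [hd] at this
      exact Ideal.mem_span_singleton.mp this
    have hunit : IsUnit d :=
      (Polynomial.isPrimitive_primPart q) d ((Polynomial.C_dvd_iff_dvd_coeff _ _).mpr hdvd)
    rw [hd]
    exact Ideal.span_singleton_eq_top.mpr hunit
  -- the ring hom ZMod k →+* A ⧸ I
  have hkR : ((k : ℤ) : A ⧸ I) = 0 := by
    have h1 : ((k : ℤ) : A ⧸ I) = ((k : ℕ) : A ⧸ I) := by push_cast; rfl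
    rw [h1]
    have h2 : ((k : ℕ) : A ⧸ I) = Ideal.Quotient.mk I ((k : ℕ) : A) := by
      rw [map_natCast]
    rw [h2]
    exact Ideal.Quotient.eq_zero_iff_mem.mpr (Ideal.subset_span rfl)
  have hlift : ∀ y ∈ Ideal.span {(k : ℤ)}, Int.castRingHom (A ⧸ I) y = 0 := by
    intro y hy
    obtain ⟨a, ha⟩ := Ideal.mem_span_singleton'.mp hy
    rw [← ha, map_mul]
    simp only [eq_intCast]
    rw [hkR, mul_zero]
  set φ : ZMod k →+* (A ⧸ I) :=
    (Ideal.Quotient.lift (Ideal.span {(k : ℤ)}) (Int.castRingHom (A ⧸ I)) hlift).comp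
      (Int.quotientSpanNatEquivZMod k).symm.toRingHom with hφ
  set x : A := ⟨α, Algebra.self_mem_adjoin_singleton ℤ α⟩ with hx
  set t : A ⧸ I := Ideal.Quotient.mk I x with ht
  have hcompZ : φ.comp (Int.castRingHom (ZMod k)) = Int.castRingHom (A ⧸ I) :=
    RingHom.ext_int _ _
  have key : ∀ p : ℤ[X], (p.map (Int.castRingHom (ZMod k))).eval₂ φ t
      = Ideal.Quotient.mk I (Polynomial.aeval x p) := by
    intro p
    rw [Polynomial.eval₂_map, hcompZ]
    have h1 : (Ideal.Quotient.mk I) (Polynomial.aeval x p)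
        = Polynomial.aeval t p := by
      rw [ht]
      have := Polynomial.aeval_algHom_apply (Ideal.Quotient.mkₐ ℤ I) x p
      rw [Ideal.Quotient.mkₐ_eq_mk] at this
      exact this.symm
    rw [h1, Polynomial.aeval_def, Subsingleton.elim (algebraMap ℤ (A ⧸ I)) (Int.castRingHom (A ⧸ I))]
  have hsurj : Function.Surjective (fun p : (ZMod k)[X] => p.eval₂ φ t) := by
    intro r
    obtain ⟨a, rfl⟩ := Ideal.Quotient.mk_surjective r
    have ha : (a : AlgebraicClosure ℚ) ∈ Algebra.adjoin ℤ ({α} : Set (AlgebraicClosure ℚ)) := a.2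
    rw [Algebra.adjoin_singleton_eq_range_aeval] at ha
    obtain ⟨p, hp⟩ := ha
    have hax : Polynomial.aeval x p = a := by
      apply Subtype.ext
      rw [← Subalgebra.aeval_coe]
      exact hp
    refine ⟨p.map (Int.castRingHom (ZMod k)), ?_⟩
    beta_reduce
    rw [key p, hax]
  have hroot : ((f₀.map (Int.castRingHom (ZMod k))).eval₂ φ t) = 0 := by
    rw [key f₀]
    have : Polynomial.aeval x f₀ = 0 := by
      apply Subtype.ext
      rw [← Subalgebra.aeval_coe]
      exact hf₀α
    rw [this, map_zero]
  have hprim' : Ideal.span (Set.range (f₀.map (Int.castRingHom (ZMod k))).coeff) = ⊤ := by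
    have hle : Ideal.map (Int.castRingHom (ZMod k)) (Ideal.span (Set.range f₀.coeff))
        ≤ Ideal.span (Set.range (f₀.map (Int.castRingHom (ZMod k))).coeff) := by
      rw [Ideal.map_span]
      apply Ideal.span_mono
      rintro _ ⟨_, ⟨i, rfl⟩, rfl⟩
      exact ⟨i, Polynomial.coeff_map _ _⟩
    rw [hprimZ, Ideal.map_top] at hle
    exact top_le_iff.mp hle
  exact aux_key ((f₀.map (Int.castRingHom (ZMod k))).natDegree) (ZMod k) (A ⧸ I) φ t hsurj _
    le_rfl hprim' hroot
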